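/- (Norm Lemma) Suppose ξ_p ∈ F, with elements a_i as in the Subfield Generators proposition and a = a_0. For every γ ∈ K^× with l(γ) < p^n, [N_{K/F}(γ)]_F ∈ ⟨[a]_F⟩. If additionally l(γ) ≤ p^n - p^i for some 0 ≤ i < n, then [N_{K/K_i}(γ)]_{K_i} ∈ ⟨[a_i]_{K_i}⟩, and moreover [N_{K/F}(γ)]_F = [a]_F^s if and only if [N_{K/K_i}(γ)]_{K_i} = [a_i]_{K_i}^s. -/

import Mathlib

namespace PC

/-- The subgroup of `p`-th powers of units of `K`. -/
def pPow (p : ℕ) (K : Type) [Field K] : Subgroup Kˣ :=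
  (powMonoidHom p : Kˣ →* Kˣ).range

/-- `J(K) = K^×/K^{×p}`, as a multiplicative abelian group. -/
abbrev Jgrp (p : ℕ) (K : Type) [Field K] := Kˣ ⧸ pPow p K

/-- The class `[u] ∈ J` of a unit `u` of `K`. -/
def cls (p : ℕ) {K : Type} [Field K] (u : Kˣ) : Jgrp p K := QuotientGroup.mk u

lemma Jgrp_pow (p : ℕ) {K : Type} [Field K] (x : Jgrp p K) : x ^ p = 1 := by
  induction x using QuotientGroup.induction_on with
  | H u =>
    show ((QuotientGroup.mk' (pPow p K)) u) ^ p = 1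
    rw [← map_pow, QuotientGroup.mk'_apply, QuotientGroup.eq_one_iff]
    exact ⟨u, rfl⟩

/-- The action of a Galois automorphism on `J`. -/
noncomputable def galJ (p : ℕ) {F K : Type} [Field F] [Field K] [Algebra F K]
    (σ : K ≃ₐ[F] K) : Jgrp p K →* Jgrp p K :=
  QuotientGroup.map (pPow p K) (pPow p K) (Units.map (σ : K →* K)) (by
    intro x hx
    rw [Subgroup.mem_comap]
    obtain ⟨v, rfl⟩ := hx
    exact ⟨Units.map (σ : K →* K) v, by simp [powMonoidHom, map_pow]⟩)

/-- `σ - 1` as an endomorphism of `J` (multiplicatively, `x ↦ σ(x)·x⁻¹`). -/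
noncomputable def sub1 (p : ℕ) {F K : Type} [Field F] [Field K] [Algebra F K]
    (σ : K ≃ₐ[F] K) : Jgrp p K →* Jgrp p K :=
  MonoidHom.mk' (fun x => galJ p σ x / x) (by
    intro a b
    show galJ p σ (a * b) / (a * b) = galJ p σ a / a * (galJ p σ b / b)
    rw [map_mul]
    exact mul_div_mul_comm (galJ p σ a) (galJ p σ b) a b)

/-- `(σ - 1)^k` as an endomorphism of `J`. -/
noncomputable def sub1pow (p : ℕ) {F K : Type} [Field F] [Field K] [Algebra F K]
    (σ : K ≃ₐ[F] K) (k : ℕ) : Jgrp p K →* Jgrp p K :=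
  Nat.rec (MonoidHom.id _) (fun _ ih => (sub1 p σ).comp ih) k

/-- The norm endomorphism of `J`, induced by `N_{K/F}` followed by the inclusion of `F` in `K`. -/
noncomputable def normOp (p : ℕ) (F : Type) {K : Type} [Field F] [Field K] [Algebra F K] :
    Jgrp p K →* Jgrp p K :=
  QuotientGroup.map (pPow p K) (pPow p K)
    (Units.map ((algebraMap F K : F →* K).comp (Algebra.norm F : K →* F))) (by
      intro x hx
      rw [Subgroup.mem_comap]
      obtain ⟨v, rfl⟩ := hx
      exact ⟨Units.map ((algebraMap F K : F →* K).comp (Algebra.norm F : K →* F)) v,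
        by simp [powMonoidHom, map_pow]⟩)

/-- The cyclic `𝔽_p[Gal(K/F)]`-submodule of `J` generated by an element. -/
noncomputable def cyc (p : ℕ) (F : Type) {K : Type} [Field F] [Field K] [Algebra F K]
    (x : Jgrp p K) : Subgroup (Jgrp p K) :=
  Subgroup.closure {y | ∃ τ : K ≃ₐ[F] K, galJ p τ x = y}

/-- The subgroup of `J` fixed pointwise by a subgroup `H` of the Galois group. -/
noncomputable def fixedJ (p : ℕ) {F K : Type} [Field F] [Field K] [Algebra F K]
    (H : Subgroup (K ≃ₐ[F] K)) : Subgroup (Jgrp p K) where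
  carrier := {x | ∀ τ ∈ H, galJ p τ x = x}
  one_mem' := by
    intro τ _
    exact map_one (galJ p τ)
  mul_mem' := by
    intro a b ha hb τ hτ
    rw [map_mul, ha τ hτ, hb τ hτ]
  inv_mem' := by
    intro a ha τ hτ
    rw [map_inv, ha τ hτ]

/-- The units of `K` lying in an intermediate field `E`. -/
def unitsIn {F K : Type} [Field F] [Field K] [Algebra F K]
    (E : IntermediateField F K) : Subgroup Kˣ where
  carrier := {u | (u : K) ∈ E}
  one_mem' := by
    show ((1 : Kˣ) : K) ∈ E
    rw [Units.val_one]
    exact one_mem E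
  mul_mem' := by
    intro a b ha hb
    show ((a * b : Kˣ) : K) ∈ E
    rw [Units.val_mul]
    exact mul_mem ha hb
  inv_mem' := by
    intro u hu
    show ((u⁻¹ : Kˣ) : K) ∈ E
    rw [Units.val_inv_eq_inv_val]
    exact inv_mem hu

/-- `[E^×] ⊆ J` : the classes of units of the intermediate field `E`. -/
noncomputable def clsOf (p : ℕ) {F K : Type} [Field F] [Field K] [Algebra F K]
    (E : IntermediateField F K) : Subgroup (Jgrp p K) :=
  (unitsIn E).map (QuotientGroup.mk' (pPow p K))

/-- `[K_m^×]` for `m ∈ {-∞, 0, 1, 2, ...}`, with `[K_{-∞}^×] = {1}`. -/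
noncomputable def clsOfW (p : ℕ) {F K : Type} [Field F] [Field K] [Algebra F K]
    (Ki : ℕ → IntermediateField F K) (m : WithBot ℕ) : Subgroup (Jgrp p K) :=
  m.recBotCoe ⊥ (fun i => clsOf p (Ki i))

/-- `p^m` for `m ∈ {-∞, 0, 1, 2, ...}`, with the convention `p^{-∞} = 0`. -/
def pPowW (p : ℕ) (m : WithBot ℕ) : ℕ := m.recBotCoe 0 (fun i => p ^ i)

/-- `m ∔ 1` : `-∞ ∔ 1 = 0` and `m ∔ 1 = m + 1` for `m ≥ 0`. -/
def succW (m : WithBot ℕ) : ℕ := m.recBotCoe 0 (fun i => i + 1)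

/-- `[N_{E/F}(E^×)] ⊆ J` : classes of norms (to `F`) of units of an intermediate field `E`. -/
noncomputable def normClsOf (p : ℕ) {F K : Type} [Field F] [Field K] [Algebra F K]
    (E : IntermediateField F K) : Subgroup (Jgrp p K) :=
  Subgroup.map (QuotientGroup.mk' (pPow p K))
    ((Units.map ((algebraMap F K : F →* K).comp (Algebra.norm F : ↥E →* F))).range)

/-- `[N_{K/F}(K^×)] ⊆ J`. -/
noncomputable def normClsTop (p : ℕ) (F K : Type) [Field F] [Field K] [Algebra F K] :
    Subgroup (Jgrp p K) :=
  Subgroup.map (QuotientGroup.mk' (pPow p K))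
    ((Units.map ((algebraMap F K : F →* K).comp (Algebra.norm F : K →* F))).range)

/-- `[N_{K/E}(K^×)] ⊆ J` for an intermediate field `E` of `K/F`. -/
noncomputable def relNormCls (p : ℕ) {F K : Type} [Field F] [Field K] [Algebra F K]
    (E : IntermediateField F K) : Subgroup (Jgrp p K) :=
  Subgroup.map (QuotientGroup.mk' (pPow p K))
    ((Units.map ((algebraMap (↥E) K : ↥E →* K).comp (Algebra.norm (↥E) : K →* ↥E))).range)

/-- `Y` is a direct sum of cyclic `𝔽_p[G]`-submodules of `J`, each of `𝔽_p`-dimension `d`. -/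
noncomputable def IsCyclicSumDim (p : ℕ) (F : Type) {K : Type} [Field F] [Field K] [Algebra F K]
    (Y : Subgroup (Jgrp p K)) (d : ℕ) : Prop :=
  ∃ (ι : Type) (g : ι → Jgrp p K),
    (∀ k, Nat.card (cyc p F (g k)) = p ^ d) ∧
    (∀ k : ι, cyc p F (g k) ⊓ (⨆ k' ∈ {k' : ι | k' ≠ k}, cyc p F (g k')) = ⊥) ∧
    Y = ⨆ k, cyc p F (g k)

/-- The "stage" predicate entering the definition of `i(K/E)` : there is `δ ∈ K^×` whose
norm class `[N_{K/E}(δ)]_E` is nontrivial and with `[δ]^{τ-1} ∈ C` for all `τ ∈ Gal(K/E)`. -/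
noncomputable def Stage (p : ℕ) (E : Type) {K : Type} [Field E] [Field K] [Algebra E K]
    (C : Subgroup (Jgrp p K)) : Prop :=
  ∃ δ : Kˣ, (∀ y : E, y ^ p ≠ Algebra.norm E (δ : K)) ∧
    ∀ τ : K ≃ₐ[E] K, cls p (Units.map (τ : K →* K) δ * δ⁻¹) ∈ C

/-- `m = i(K/F)` : the stage `m` is realized and no smaller stage is. -/
noncomputable def IsIdx (p : ℕ) {F K : Type} [Field F] [Field K] [Algebra F K]
    (Ki : ℕ → IntermediateField F K) (m : WithBot ℕ) : Prop :=
  Stage p F (clsOfW p Ki m) ∧ ∀ i : WithBot ℕ, i < m → ¬ Stage p F (clsOfW p Ki i)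

/-- `δ` is an exceptional element of `K/F`, relative to `m = i(K/F)`. -/
noncomputable def IsExceptional (p : ℕ) (F : Type) {K : Type} [Field F] [Field K] [Algebra F K]
    (Ki : ℕ → IntermediateField F K) (m : WithBot ℕ) (δ : Kˣ) : Prop :=
  (∀ y : F, y ^ p ≠ Algebra.norm F (δ : K)) ∧
    ∀ τ : K ≃ₐ[F] K, cls p (Units.map (τ : K →* K) δ * δ⁻¹) ∈ clsOfW p Ki m



lemma subgroup_eq_zpowers {G : Type*} [Group G] [Finite G] (σ : G)
    (hσ : ∀ τ, τ ∈ Subgroup.zpowers σ) {p n : ℕ} (hp : p.Prime)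
    (hG : Nat.card G = p ^ n) {j : ℕ} (hj : j ≤ n) (H : Subgroup G)
    (hH : Nat.card H = p ^ (n - j)) : H = Subgroup.zpowers (σ ^ p ^ j) := by
  have hfin := Fintype.ofFinite G
  haveI : IsCyclic G := ⟨⟨σ, hσ⟩⟩
  have horder : orderOf σ = p ^ n := by
    rw [orderOf_eq_card_of_forall_mem_zpowers hσ]; exact hG
  obtain ⟨g, hg⟩ := IsCyclic.exists_generator (α := ↥H)
  have hHg : H = Subgroup.zpowers (g : G) := by
    ext x
    constructor
    · intro hx
      obtain ⟨k, hk⟩ := hg ⟨x, hx⟩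
      exact ⟨k, by have := congrArg Subtype.val hk; simpa using this⟩
    · rintro ⟨k, rfl⟩
      simpa using (H.zpow_mem g.2 k)
  obtain ⟨m, hm⟩ := mem_powers_iff_mem_zpowers.mpr (hσ (g : G))
  have hog : orderOf ((g : G)) = p ^ (n - j) := by
    rw [Subgroup.orderOf_coe, orderOf_eq_card_of_forall_mem_zpowers hg]; exact hH
  have hom : orderOf (σ ^ m) = p ^ (n - j) := by rw [show σ ^ m = (g : G) from hm, hog]
  rw [orderOf_pow, horder] at hom
  have hdvd : Nat.gcd (p ^ n) m ∣ p ^ n := Nat.gcd_dvd_left _ _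
  have hgcd : Nat.gcd (p ^ n) m = p ^ j := by
    have h1 : p ^ n = Nat.gcd (p ^ n) m * p ^ (n - j) := by
      rw [← hom]; exact (Nat.mul_div_cancel' hdvd).symm
    have h2 : p ^ n = p ^ j * p ^ (n - j) := by
      rw [← pow_add]; congr 1; omega
    have hpos : 0 < p ^ (n - j) := pow_pos hp.pos _
    exact Nat.eq_of_mul_eq_mul_right hpos (by omega)
  have hmem1 : σ ^ p ^ j ∈ Subgroup.zpowers (σ ^ m) := by
    have hb := Nat.gcd_eq_gcd_ab (p ^ n) m
    rw [hgcd] at hb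
    have : (σ ^ (p ^ j : ℕ) : G) = (σ ^ m) ^ (Nat.gcdB (p ^ n) m) := by
      have hσpn : (σ : G) ^ (p ^ n : ℕ) = 1 := by rw [← horder, pow_orderOf_eq_one]
      calc (σ ^ (p ^ j : ℕ) : G) = σ ^ ((p ^ j : ℕ) : ℤ) := by rw [zpow_natCast]
        _ = σ ^ ((p ^ n : ℕ) * Nat.gcdA (p ^ n) m + (m : ℤ) * Nat.gcdB (p ^ n) m) := by
            rw [← hb]
        _ = (σ ^ ((p ^ n : ℕ) : ℤ)) ^ Nat.gcdA (p ^ n) m *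
            (σ ^ (m : ℤ)) ^ Nat.gcdB (p ^ n) m := by
            rw [zpow_add, zpow_mul, zpow_mul]
        _ = (σ ^ m) ^ Nat.gcdB (p ^ n) m := by
            rw [zpow_natCast, zpow_natCast, hσpn, one_zpow, one_mul]
    exact ⟨_, this.symm⟩
  have hmem2 : σ ^ m ∈ Subgroup.zpowers (σ ^ p ^ j) := by
    obtain ⟨t, rfl⟩ : p ^ j ∣ m := hgcd ▸ Nat.gcd_dvd_right (p ^ n) m
    exact ⟨(t : ℤ), by show (σ ^ p ^ j) ^ (t : ℤ) = σ ^ (p ^ j * t); rw [zpow_natCast, ← pow_mul]⟩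
  rw [hHg, ← hm]
  exact le_antisymm ((Subgroup.zpowers_le).mpr hmem2) ((Subgroup.zpowers_le).mpr hmem1)


section Main
set_option linter.unusedSectionVars false
variable {p n : ℕ} {F K : Type} [Field F] [Field K] [Algebra F K]
    [FiniteDimensional F K] [IsGalois F K]

lemma finrank_K (hG : Nat.card (K ≃ₐ[F] K) = p ^ n) : Module.finrank F K = p ^ n := by
  rw [← IsGalois.card_aut_eq_finrank]; exact hG

lemma finrank_top (hp : p.Prime) (hG : Nat.card (K ≃ₐ[F] K) = p ^ n)
    (Ki : ℕ → IntermediateField F K)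
    (hKideg : ∀ i, i ≤ n → Module.finrank F ↥(Ki i) = p ^ i)
    {i : ℕ} (hi : i ≤ n) : Module.finrank ↥(Ki i) K = p ^ (n - i) := by
  have h2 := Module.finrank_mul_finrank F ↥(Ki i) K
  rw [hKideg i hi, finrank_K hG] at h2
  have h3 : p ^ i * p ^ (n - i) = p ^ n := by rw [← pow_add]; congr 1; omega
  have hpos : 0 < p ^ i := pow_pos hp.pos _
  exact Nat.eq_of_mul_eq_mul_left hpos (h2.trans h3.symm)

lemma fixing_eq (hp : p.Prime) (σ : K ≃ₐ[F] K) (hσ : ∀ τ, τ ∈ Subgroup.zpowers σ)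
    (hG : Nat.card (K ≃ₐ[F] K) = p ^ n)
    (Ki : ℕ → IntermediateField F K)
    (hKideg : ∀ i, i ≤ n → Module.finrank F ↥(Ki i) = p ^ i)
    {i : ℕ} (hi : i ≤ n) :
    (Ki i).fixingSubgroup = Subgroup.zpowers (σ ^ p ^ i) := by
  haveI : FiniteDimensional ↥(Ki i) K := FiniteDimensional.right F ↥(Ki i) K
  apply subgroup_eq_zpowers σ hσ hp hG hi
  have h1 : Nat.card ↥(Ki i).fixingSubgroup = Nat.card (K ≃ₐ[↥(Ki i)] K) :=
    Nat.card_congr (IntermediateField.fixingSubgroupEquiv (Ki i)).toEquiv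
  rw [h1, IsGalois.card_aut_eq_finrank]
  exact finrank_top hp hG Ki hKideg hi

lemma mem_of_fixed (hp : p.Prime) (σ : K ≃ₐ[F] K) (hσ : ∀ τ, τ ∈ Subgroup.zpowers σ)
    (hG : Nat.card (K ≃ₐ[F] K) = p ^ n)
    (Ki : ℕ → IntermediateField F K)
    (hKideg : ∀ i, i ≤ n → Module.finrank F ↥(Ki i) = p ^ i)
    {i : ℕ} (hi : i ≤ n) {x : K}
    (hx : (σ ^ p ^ i) x = x) : x ∈ Ki i := by
  have hst : Subgroup.zpowers (σ ^ p ^ i) ≤ MulAction.stabilizer (K ≃ₐ[F] K) x :=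
    Subgroup.zpowers_le.mpr (by rw [MulAction.mem_stabilizer_iff]; exact hx)
  rw [← IsGalois.fixedField_fixingSubgroup (Ki i), fixing_eq hp σ hσ hG Ki hKideg hi]
  exact fun g => hst g.2

lemma fixed_of_mem (hp : p.Prime) (σ : K ≃ₐ[F] K) (hσ : ∀ τ, τ ∈ Subgroup.zpowers σ)
    (hG : Nat.card (K ≃ₐ[F] K) = p ^ n)
    (Ki : ℕ → IntermediateField F K)
    (hKideg : ∀ i, i ≤ n → Module.finrank F ↥(Ki i) = p ^ i)
    {i : ℕ} (hi : i ≤ n) {x : K} (hx : x ∈ Ki i) :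
    (σ ^ p ^ i) x = x := by
  have hmem : σ ^ p ^ i ∈ (Ki i).fixingSubgroup := by
    rw [fixing_eq hp σ hσ hG Ki hKideg hi]; exact Subgroup.mem_zpowers _
  exact hmem ⟨x, hx⟩


lemma galJ_mk (τ : K ≃ₐ[F] K) (u : Kˣ) :
    galJ p τ (cls p u) = cls p (Units.map (τ : K →* K) u) := rfl

lemma galJ_mul (τ τ' : K ≃ₐ[F] K) (y : Jgrp p K) :
    galJ p (τ * τ') y = galJ p τ (galJ p τ' y) := by
  induction y using QuotientGroup.induction_on with
  | H u =>
    show galJ p (τ * τ') (cls p u) = galJ p τ (galJ p τ' (cls p u))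
    rw [galJ_mk, galJ_mk, galJ_mk]
    congr 1

lemma galJ_one (y : Jgrp p K) : galJ p (1 : K ≃ₐ[F] K) y = y := by
  induction y using QuotientGroup.induction_on with
  | H u =>
    show galJ p (1 : K ≃ₐ[F] K) (cls p u) = cls p u
    rw [galJ_mk]
    congr 1



open Polynomial in
lemma poly_identity (p : ℕ) (hp : p.Prime) {i n : ℕ} (hi : i ≤ n) :
    ∑ j ∈ Finset.range (p ^ (n - i)), ((X : (ZMod p)[X]) ^ p ^ i) ^ j
      = (X - 1) ^ (p ^ n - p ^ i) := by
  haveI := Fact.mk hp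
  have hne : ((X : (ZMod p)[X]) ^ p ^ i) - 1 ≠ 0 := by
    have := Polynomial.X_pow_sub_C_ne_zero (n := p ^ i) (pow_pos hp.pos _)
      (1 : ZMod p)
    simpa using this
  apply mul_right_cancel₀ hne
  rw [geom_sum_mul]
  have h1 : ((X : (ZMod p)[X]) - 1) ^ p ^ i = X ^ p ^ i - 1 := by
    rw [sub_pow_char_pow]; simp
  have h2 : p ^ n - p ^ i + p ^ i = p ^ n := Nat.sub_add_cancel (Nat.pow_le_pow_right hp.pos hi)
  calc (X ^ p ^ i) ^ p ^ (n - i) - 1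
      = (X : (ZMod p)[X]) ^ p ^ n - 1 := by
        have hq : p ^ i * p ^ (n - i) = p ^ n := by rw [← pow_add]; congr 1; omega
        rw [← pow_mul, hq]
    _ = ((X : (ZMod p)[X]) - 1) ^ p ^ n := by rw [sub_pow_char_pow]; simp
    _ = ((X : (ZMod p)[X]) - 1) ^ (p ^ n - p ^ i) * ((X - 1) ^ p ^ i) := by
        rw [← pow_add, h2]
    _ = (X - 1) ^ (p ^ n - p ^ i) * (X ^ p ^ i - 1) := by rw [h1]



lemma norm_map_eq_prod (hp : p.Prime) (σ : K ≃ₐ[F] K) (hσ : ∀ τ, τ ∈ Subgroup.zpowers σ)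
    (hG : Nat.card (K ≃ₐ[F] K) = p ^ n)
    (Ki : ℕ → IntermediateField F K)
    (hKideg : ∀ i, i ≤ n → Module.finrank F ↥(Ki i) = p ^ i)
    {i : ℕ} (hi : i ≤ n) (x : K) :
    algebraMap (↥(Ki i)) K (Algebra.norm (↥(Ki i)) x)
      = ∏ j ∈ Finset.range (p ^ (n - i)), (σ ^ (p ^ i * j)) x := by
  haveI : FiniteDimensional ↥(Ki i) K := FiniteDimensional.right F ↥(Ki i) K
  have horder : orderOf σ = p ^ n := by
    have hfin := Fintype.ofFinite (K ≃ₐ[F] K)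
    rw [orderOf_eq_card_of_forall_mem_zpowers hσ]; exact hG
  have hordg : orderOf (σ ^ p ^ i) = p ^ (n - i) := by
    rw [orderOf_pow, horder, Nat.gcd_eq_right (pow_dvd_pow p hi), Nat.pow_div hi hp.pos]
  have hfix : (Ki i).fixingSubgroup = Subgroup.zpowers (σ ^ p ^ i) :=
    fixing_eq hp σ hσ hG Ki hKideg hi
  have hfo : IsOfFinOrder (σ ^ p ^ i) := by
    have hfin := Fintype.ofFinite (K ≃ₐ[F] K)
    exact isOfFinOrder_of_finite _
  haveI : Fintype ↥(Ki i).fixingSubgroup := Fintype.ofFinite _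
  haveI : Fintype ↥(Subgroup.zpowers (σ ^ p ^ i)) := Fintype.ofFinite _
  calc algebraMap (↥(Ki i)) K (Algebra.norm (↥(Ki i)) x)
      = ∏ τ : K ≃ₐ[↥(Ki i)] K, τ x := Algebra.norm_eq_prod_automorphisms _ x
    _ = ∏ h : ↥(Ki i).fixingSubgroup, ((h : K ≃ₐ[F] K)) x :=
        (Fintype.prod_equiv (IntermediateField.fixingSubgroupEquiv (Ki i)).toEquiv
          (fun h => ((h : K ≃ₐ[F] K)) x) (fun τ => τ x) (fun h => rfl)).symm
    _ = ∏ h : ↥(Subgroup.zpowers (σ ^ p ^ i)), ((h : K ≃ₐ[F] K)) x :=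
        Fintype.prod_equiv (MulEquiv.subgroupCongr hfix).toEquiv
          (fun h => ((h : K ≃ₐ[F] K)) x) (fun h => ((h : K ≃ₐ[F] K)) x) (fun h => rfl)
    _ = ∏ j : Fin (orderOf (σ ^ p ^ i)), ((σ ^ p ^ i) ^ (j : ℕ)) x :=
        (Fintype.prod_equiv (finEquivZPowers hfo)
          (fun j => ((σ ^ p ^ i) ^ (j : ℕ)) x) (fun h => ((h : K ≃ₐ[F] K)) x)
          (fun j => rfl)).symm
    _ = ∏ j ∈ Finset.range (p ^ (n - i)), (σ ^ (p ^ i * j)) x := by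
        rw [hordg, Fin.prod_univ_eq_prod_range (fun j => ((σ ^ p ^ i) ^ j) x)]
        exact Finset.prod_congr rfl (fun j _ => by rw [pow_mul])

lemma norm_mem_pPow (hp : p.Prime) (σ : K ≃ₐ[F] K) (hσ : ∀ τ, τ ∈ Subgroup.zpowers σ)
    (hG : Nat.card (K ≃ₐ[F] K) = p ^ n)
    (Ki : ℕ → IntermediateField F K)
    (hKideg : ∀ i, i ≤ n → Module.finrank F ↥(Ki i) = p ^ i)
    {i : ℕ} (hi : i ≤ n)
    (γ : Kˣ) (l : ℕ) (hcard : Nat.card (cyc p F (cls p γ)) = p ^ l)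
    (hl : l ≤ p ^ n - p ^ i) :
    ∃ z : Kˣ, (z : K) ^ p = algebraMap (↥(Ki i)) K (Algebra.norm (↥(Ki i)) ((γ : K))) := by
  haveI := Fact.mk hp
  haveI : NeZero p := ⟨hp.ne_zero⟩
  letI : AddCommMonoid (Additive (Jgrp p K)) := AddCommGroup.toAddCommMonoid
  obtain ⟨_⟩ : Nonempty (Module (ZMod p) (Additive (Jgrp p K))) := ⟨AddCommGroup.zmodModule (n := p) (G := Additive (Jgrp p K)) (fun x => by
    apply Additive.toMul.injective
    rw [toMul_nsmul, toMul_zero]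
    exact Jgrp_pow p _)⟩
  set T : Module.End (ZMod p) (Additive (Jgrp p K)) :=
    AddMonoidHom.toZModLinearMap p (M := Additive (Jgrp p K)) (M₁ := Additive (Jgrp p K)) (MonoidHom.toAdditive (galJ p σ)) with hTdef
  have hTap : ∀ y : Jgrp p K, T (Additive.ofMul y) = Additive.ofMul (galJ p σ y) :=
    fun y => rfl
  have hTpow : ∀ (k : ℕ) (y : Jgrp p K),
      (T ^ k) (Additive.ofMul y) = Additive.ofMul (galJ p (σ ^ k) y) := by
    intro k
    induction k with
    | zero => intro y; rw [pow_zero, pow_zero]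
              simp only [Module.End.one_apply]
              rw [galJ_one y]
    | succ k ih =>
        intro y
        rw [pow_succ, pow_succ, Module.End.mul_apply, hTap, ih, ← galJ_mul]
  have horder : orderOf σ = p ^ n := by
    have hfin := Fintype.ofFinite (K ≃ₐ[F] K)
    rw [orderOf_eq_card_of_forall_mem_zpowers hσ]; exact hG
  -- the span of the orbit
  set S : Set (Jgrp p K) := {y | ∃ τ : K ≃ₐ[F] K, galJ p τ (cls p γ) = y} with hSdef
  set V : Submodule (ZMod p) (Additive (Jgrp p K)) :=
    Submodule.span (ZMod p) (⇑Additive.ofMul '' S) with hVdef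
  have hmemV : ∀ x : Additive (Jgrp p K), x ∈ V ↔ Additive.toMul x ∈ cyc p F (cls p γ) := by
    have h1 : ∀ y : Jgrp p K, y ∈ cyc p F (cls p γ) → Additive.ofMul y ∈ V := by
      intro y hy
      induction hy using Subgroup.closure_induction with
      | mem y hy => exact Submodule.subset_span ⟨y, hy, rfl⟩
      | one => exact V.zero_mem
      | mul y z hy hz hy' hz' => exact V.add_mem hy' hz'
      | inv y hy hy' => exact V.neg_mem hy'
    intro x
    constructor
    · intro hx
      induction hx using Submodule.span_induction with
      | mem y hy => obtain ⟨z, hz, rfl⟩ := hy; exact Subgroup.subset_closure hz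
      | zero => exact (cyc p F (cls p γ)).one_mem
      | add y z hy hz hy' hz' => exact (cyc p F (cls p γ)).mul_mem hy' hz'
      | smul c y hy hy' =>
          obtain ⟨m, rfl⟩ := ZMod.natCast_zmod_surjective c
          rw [← ZMod.intCast_zmod_cast ((m : ZMod p)), Int.cast_smul_eq_zsmul]
          exact (cyc p F (cls p γ)).zpow_mem hy' _
    · exact h1 (Additive.toMul x)
  have hcardV : Nat.card V = p ^ l := by
    rw [← hcard]
    exact Nat.card_congr (Equiv.subtypeEquiv Additive.toMul (fun y => hmemV y))
  have hx0 : Additive.ofMul (cls p γ) ∈ V :=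
    Submodule.subset_span ⟨cls p γ, ⟨1, galJ_one _⟩, rfl⟩
  have hstabT : ∀ v ∈ V, T v ∈ V := by
    have hmap : Submodule.map T V ≤ V := by
      rw [hVdef, Submodule.map_span, Submodule.span_le]
      rintro _ ⟨_, ⟨y, ⟨τ, rfl⟩, rfl⟩, rfl⟩
      rw [hTap]
      exact Submodule.subset_span ⟨_, ⟨σ * τ, galJ_mul σ τ _⟩, rfl⟩
    intro v hv
    exact hmap ⟨v, hv, rfl⟩
  set U : Module.End (ZMod p) (Additive (Jgrp p K)) := T - 1 with hUdef
  have hstabU : ∀ v ∈ V, U v ∈ V := fun v hv => by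
    rw [hUdef]
    simpa using V.sub_mem (hstabT v hv) hv
  have hT1 : T ^ p ^ n = 1 := by
    apply LinearMap.ext
    intro x
    have hσpn : σ ^ p ^ n = 1 := by rw [← horder]; exact pow_orderOf_eq_one σ
    have h5 := hTpow (p ^ n) (Additive.toMul x)
    rw [hσpn, galJ_one] at h5
    simpa using h5
  have hUpow : U ^ p ^ n = 0 := by
    have hid : ((Polynomial.X : Polynomial (ZMod p)) - 1) ^ p ^ n
        = Polynomial.X ^ p ^ n - 1 := by
      rw [sub_pow_char_pow]; simp
    have h6 := congrArg (Polynomial.aeval T) hid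
    simp only [map_pow, map_sub, Polynomial.aeval_X, map_one] at h6
    rw [hUdef, h6, hT1, sub_self]
  haveI hVfin : Finite V := Nat.finite_of_card_ne_zero (by
    rw [hcardV]; exact (pow_pos hp.pos l).ne')
  have hfrV : Module.finrank (ZMod p) V = l := by
    haveI := Fintype.ofFinite ↥V
    have h1 : Fintype.card ↥V = p ^ Module.finrank (ZMod p) ↥V := by
      rw [Module.card_eq_pow_finrank (K := ZMod p) (V := ↥V), ZMod.card]
    have h2 : Fintype.card ↥V = p ^ l := by rw [← Nat.card_eq_fintype_card, hcardV]
    exact Nat.pow_right_injective hp.two_le (h1.symm.trans h2)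
  set f : Module.End (ZMod p) V := LinearMap.restrict U hstabU with hfdef
  have hfpow : f ^ p ^ n = 0 := by
    apply LinearMap.ext
    intro v
    rw [hfdef, Module.End.pow_restrict]
    apply Subtype.ext
    rw [LinearMap.restrict_apply]
    simp [hUpow]
  have hfl : f ^ l = 0 := by
    have hker : LinearMap.ker (f ^ p ^ n) = ⊤ := by rw [hfpow]; exact LinearMap.ker_zero
    have h7 := Module.End.ker_pow_le_ker_pow_finrank f (p ^ n)
    rw [hker, top_le_iff, hfrV] at h7
    exact LinearMap.ker_eq_top.mp h7
  have hUl : (U ^ l) (Additive.ofMul (cls p γ)) = 0 := by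
    have h8 : (f ^ l) ⟨Additive.ofMul (cls p γ), hx0⟩ = 0 := by rw [hfl]; rfl
    rw [hfdef, Module.End.pow_restrict] at h8
    have h9 := congrArg Subtype.val h8
    rw [LinearMap.restrict_apply] at h9
    simpa using h9
  have hsum : ∑ j ∈ Finset.range (p ^ (n - i)),
      Additive.ofMul (galJ p (σ ^ (p ^ i * j)) (cls p γ)) = 0 := by
    have hid := poly_identity p hp hi
    have h2 := congrArg (Polynomial.aeval T) hid
    simp only [map_sum, map_pow, map_sub, Polynomial.aeval_X, map_one] at h2
    have h3 := congrArg (fun g : Module.End (ZMod p) (Additive (Jgrp p K)) =>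
      g (Additive.ofMul (cls p γ))) h2
    simp only [LinearMap.coe_sum, Finset.sum_apply] at h3
    have hL : ∀ j, ((T ^ p ^ i) ^ j) (Additive.ofMul (cls p γ))
        = Additive.ofMul (galJ p (σ ^ (p ^ i * j)) (cls p γ)) := by
      intro j; rw [← pow_mul, hTpow]
    have hR : ((T - 1) ^ (p ^ n - p ^ i)) (Additive.ofMul (cls p γ)) = 0 := by
      have hdecomp : (T - 1) ^ (p ^ n - p ^ i) = U ^ (p ^ n - p ^ i - l) * U ^ l := by
        rw [hUdef, ← pow_add, Nat.sub_add_cancel hl]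
      rw [hdecomp, Module.End.mul_apply, hUl, map_zero]
    rw [hR] at h3
    rw [← h3]
    exact Finset.sum_congr rfl (fun j _ => (hL j).symm)
  have hprod : ∏ j ∈ Finset.range (p ^ (n - i)), galJ p (σ ^ (p ^ i * j)) (cls p γ) = 1 := by
    apply Additive.ofMul.injective
    rw [ofMul_prod]
    simpa using hsum
  set w : Kˣ := ∏ j ∈ Finset.range (p ^ (n - i)),
    Units.map ((σ ^ (p ^ i * j) : K ≃ₐ[F] K) : K →* K) γ with hwdef
  have hclsw : cls p w = 1 := by
    have h4 : cls p w = ∏ j ∈ Finset.range (p ^ (n - i)),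
        cls p (Units.map ((σ ^ (p ^ i * j) : K ≃ₐ[F] K) : K →* K) γ) := by
      rw [hwdef]
      exact map_prod (QuotientGroup.mk' (pPow p K)) _ _
    rw [h4, ← hprod]
    exact Finset.prod_congr rfl (fun j _ => (galJ_mk _ γ).symm)
  have hwmem : w ∈ pPow p K := (QuotientGroup.eq_one_iff w).mp hclsw
  obtain ⟨v, hv⟩ := hwmem
  refine ⟨v, ?_⟩
  have hval : (w : K) = algebraMap (↥(Ki i)) K (Algebra.norm (↥(Ki i)) ((γ : K))) := by
    rw [norm_map_eq_prod hp σ hσ hG Ki hKideg hi, hwdef, Units.coe_prod]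
    exact Finset.prod_congr rfl (fun j _ => rfl)
  rw [← hval, ← hv]
  have : powMonoidHom p v = v ^ p := rfl
  rw [this]
  rw [Units.val_pow_eq_pow_val]


lemma root_of_unity_factor (hp : p.Prime) {ζ : K} (hζK : IsPrimitiveRoot ζ p)
    (τ : K ≃ₐ[F] K) {u : K} (hu : u ≠ 0) (hfix : τ (u ^ p) = u ^ p) :
    ∃ k, k < p ∧ τ u = ζ ^ k * u := by
  haveI : NeZero p := ⟨hp.ne_zero⟩
  have h1 : (τ u / u) ^ p = 1 := by
    rw [div_pow, ← map_pow, hfix, div_self (pow_ne_zero p hu)]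
  obtain ⟨k, hk, hζk⟩ := hζK.eq_pow_of_pow_eq_one h1
  refine ⟨k, hk, ?_⟩
  rw [hζk, div_mul_cancel₀ _ hu]

lemma pow_fix_of_fix (τ : K ≃ₐ[F] K) {ζ u : K} (hτζ : τ ζ = ζ) {k : ℕ}
    (hu : τ u = ζ ^ k * u) (m : ℕ) : (τ ^ m) u = ζ ^ (k * m) * u := by
  induction m with
  | zero => simp
  | succ m ih =>
      rw [pow_succ', AlgEquiv.mul_apply, ih, map_mul, map_pow, hτζ, hu,
        ← mul_assoc, ← pow_add, show k * m + k = k * (m + 1) by ring]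
  
lemma kummer_descend (hp : p.Prime) (σ : K ≃ₐ[F] K) (hσ : ∀ τ, τ ∈ Subgroup.zpowers σ)
    (hG : Nat.card (K ≃ₐ[F] K) = p ^ n)
    (Ki : ℕ → IntermediateField F K)
    (hKideg : ∀ i, i ≤ n → Module.finrank F ↥(Ki i) = p ^ i)
    (hchain : ∀ i j : ℕ, i ≤ j → j ≤ n → Ki i ≤ Ki j)
    {ζF : F} (hζ : IsPrimitiveRoot ζF p)
    {i : ℕ} (hi : i < n) {ai : ↥(Ki i)} (hai0 : (ai : K) ≠ 0)
    {r : K} (hrp : r ^ p = (ai : K))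
    (hKsup : Ki (i+1) = Ki i ⊔ IntermediateField.adjoin F {r})
    {c : K} (hc : c ∈ Ki i) {z : K} (hz0 : z ≠ 0) (hz : z ^ p = c) :
    ∃ (s : ℕ) (w : K), w ∈ Ki i ∧ c = (ai : K) ^ s * w ^ p := by
  haveI := Fact.mk hp
  haveI : NeZero p := ⟨hp.ne_zero⟩
  set ζ : K := algebraMap F K ζF with hζdef
  have hζK : IsPrimitiveRoot ζ p :=
    hζ.map_of_injective (f := algebraMap F K) (algebraMap F K).injective
  set τ : K ≃ₐ[F] K := σ ^ p ^ i with hτdef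
  have hτfix : ∀ x ∈ Ki i, τ x = x := fun x hx =>
    fixed_of_mem hp σ hσ hG Ki hKideg hi.le hx
  have hτζ : τ ζ = ζ := AlgEquiv.commutes τ ζF
  -- z is moved by a root of unity
  obtain ⟨k, hk, hzk⟩ := root_of_unity_factor hp hζK τ hz0 (by rw [hz]; exact hτfix c hc)
  -- r is nonzero and moved by a root of unity
  have hr0 : r ≠ 0 := by
    intro h
    rw [h, zero_pow hp.ne_zero] at hrp
    exact hai0 hrp.symm
  obtain ⟨d, hd, hrd⟩ := root_of_unity_factor hp hζK τ hr0 (by rw [hrp]; exact hτfix _ ai.2)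
  by_cases hd0 : (d : ZMod p) = 0
  · -- then r would be fixed, contradiction with degrees
    exfalso
    have hdd : p ∣ d := (ZMod.natCast_eq_zero_iff d p).mp hd0
    obtain ⟨t, rfl⟩ := hdd
    have hζd : ζ ^ (p * t) = 1 := by rw [pow_mul, hζK.pow_eq_one, one_pow]
    have hτr : τ r = r := by rw [hrd, hζd, one_mul]
    have hrKi : r ∈ Ki i := mem_of_fixed hp σ hσ hG Ki hKideg hi.le hτr
    have hle : Ki (i + 1) ≤ Ki i := by
      rw [hKsup]
      exact sup_le le_rfl (IntermediateField.adjoin_le_iff.mpr (by simpa using hrKi))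
    have heq : Ki (i + 1) = Ki i := le_antisymm hle (hchain i (i + 1) (by omega) hi)
    have h1 := hKideg (i + 1) hi
    have h2 := hKideg i hi.le
    rw [heq, h2] at h1
    exact absurd (Nat.pow_right_injective hp.two_le h1) (by omega)
  · -- choose e with d * e ≡ k  mod p
    set e : ℕ := (((k : ZMod p)) * (d : ZMod p)⁻¹).val with hedef
    have hde : ζ ^ (d * e) = ζ ^ k := by
      have horderζ : orderOf ζ = p := (hζK.eq_orderOf).symm
      have hcast : ((d * e : ℕ) : ZMod p) = ((k : ℕ) : ZMod p) := by
        push_cast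
        rw [hedef]
        push_cast [ZMod.natCast_val, ZMod.cast_id]
        field_simp
      have hmod : (d * e) % p = k % p := (ZMod.natCast_eq_natCast_iff _ _ _).mp hcast
      calc ζ ^ (d * e) = ζ ^ ((d * e) % orderOf ζ) := (pow_mod_orderOf ζ (d * e)).symm
        _ = ζ ^ (k % orderOf ζ) := by rw [horderζ, hmod]
        _ = ζ ^ k := pow_mod_orderOf ζ k
    set w : K := z / r ^ e with hwdef
    have hτw : τ w = w := by
      rw [hwdef, map_div₀, map_pow, hzk, hrd, mul_pow, ← pow_mul, hde]
      rw [mul_div_mul_left _ _ (pow_ne_zero k (hζK.ne_zero hp.ne_zero))]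
    have hwKi : w ∈ Ki i := mem_of_fixed hp σ hσ hG Ki hKideg hi.le hτw
    refine ⟨e, w, hwKi, ?_⟩
    have hre : r ^ e ≠ 0 := pow_ne_zero e hr0
    have hwp : w ^ p = c / ((ai : K)) ^ e := by
      rw [hwdef, div_pow, hz, ← pow_mul, mul_comm e p, pow_mul, hrp]
    rw [hwp, mul_div_cancel₀ _ (pow_ne_zero e hai0)]


lemma master (hp : p.Prime) (σ : K ≃ₐ[F] K) (hσ : ∀ τ, τ ∈ Subgroup.zpowers σ)
    (hG : Nat.card (K ≃ₐ[F] K) = p ^ n)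
    (Ki : ℕ → IntermediateField F K)
    (hKideg : ∀ i, i ≤ n → Module.finrank F ↥(Ki i) = p ^ i)
    (hchain : ∀ i j : ℕ, i ≤ j → j ≤ n → Ki i ≤ Ki j)
    {ζF : F} (hζ : IsPrimitiveRoot ζF p)
    (a : (i : ℕ) → ↥(Ki i)) (ha0 : ∀ i : ℕ, i < n → (a i : K) ≠ 0)
    (haKum : ∀ i : ℕ, i < n → ∃ r : K, r ^ p = (a i : K) ∧
      Ki (i + 1) = Ki i ⊔ IntermediateField.adjoin F {r})
    {i : ℕ} (hi : i < n)
    (γ : Kˣ) (l : ℕ) (hcard : Nat.card (cyc p F (cls p γ)) = p ^ l)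
    (hl : l ≤ p ^ n - p ^ i) :
    ∃ (s : ℕ) (y : ↥(Ki i)), Algebra.norm (↥(Ki i)) ((γ : K)) = (a i) ^ s * y ^ p := by
  obtain ⟨z, hz⟩ := norm_mem_pPow hp σ hσ hG Ki hKideg hi.le γ l hcard hl
  obtain ⟨r, hrp, hKsup⟩ := haKum i hi
  have hc : algebraMap (↥(Ki i)) K (Algebra.norm (↥(Ki i)) ((γ : K))) ∈ Ki i := by
    rw [IntermediateField.algebraMap_apply]
    exact (Algebra.norm (↥(Ki i)) ((γ : K))).2
  obtain ⟨s, w, hw, hcw⟩ := kummer_descend hp σ hσ hG Ki hKideg hchain hζ hi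
    (ha0 i hi) hrp hKsup hc (Units.ne_zero z) hz
  refine ⟨s, ⟨w, hw⟩, ?_⟩
  apply (algebraMap (↥(Ki i)) K).injective
  rw [map_mul, map_pow, map_pow]
  exact hcw

lemma norm_a (hp : p.Prime)
    (Ki : ℕ → IntermediateField F K)
    (hKideg : ∀ i, i ≤ n → Module.finrank F ↥(Ki i) = p ^ i)
    (hchain : ∀ i j : ℕ, i ≤ j → j ≤ n → Ki i ≤ Ki j)
    (a : (i : ℕ) → ↥(Ki i))
    (haNorm : ∀ j i : ℕ, ∀ hji : j < i, ∀ hi : i < n,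
      (@Algebra.norm (↥(Ki j)) (↥(Ki i)) _ _
        ((IntermediateField.inclusion (hchain j i hji.le hi.le)).toRingHom.toAlgebra))
        (a i) = a j)
    (aF : F) (haF : algebraMap F K aF = (a 0 : K))
    {i : ℕ} (hi : i < n) : Algebra.norm F (a i) = aF := by
  have h0 : Module.finrank F ↥(Ki 0) = 1 := by simpa using hKideg 0 (by omega)
  have ha0eq : a 0 = algebraMap F ↥(Ki 0) aF := by
    apply Subtype.ext
    rw [← haF]
    rfl
  have hn0 : Algebra.norm F (a 0) = aF := by
    rw [ha0eq, Algebra.norm_algebraMap, h0, pow_one]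
  rcases Nat.eq_zero_or_pos i with rfl | hipos
  · exact hn0
  · letI : Algebra ↥(Ki 0) ↥(Ki i) :=
      (IntermediateField.inclusion (hchain 0 i (by omega) hi.le)).toRingHom.toAlgebra
    haveI : IsScalarTower F ↥(Ki 0) ↥(Ki i) := IsScalarTower.of_algebraMap_eq (fun x => by
      apply Subtype.ext
      rfl)
    haveI : Algebra.IsSeparable F ↥(Ki i) :=
      Algebra.isSeparable_tower_bot_of_isSeparable F ↥(Ki i) K
    have h2 := Algebra.norm_norm (R := F) (S := ↥(Ki 0)) (a := a i)
    rw [haNorm 0 i hipos hi] at h2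
    rw [← h2, hn0]

lemma aF_not_pow (hp : p.Prime) (hn : 1 ≤ n)
    (Ki : ℕ → IntermediateField F K)
    (hKideg : ∀ i, i ≤ n → Module.finrank F ↥(Ki i) = p ^ i)
    (hchain : ∀ i j : ℕ, i ≤ j → j ≤ n → Ki i ≤ Ki j)
    {ζF : F} (hζ : IsPrimitiveRoot ζF p)
    (a : (i : ℕ) → ↥(Ki i)) (ha00 : (a 0 : K) ≠ 0)
    (haKum : ∀ i : ℕ, i < n → ∃ r : K, r ^ p = (a i : K) ∧
      Ki (i + 1) = Ki i ⊔ IntermediateField.adjoin F {r})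
    (aF : F) (haF : algebraMap F K aF = (a 0 : K)) :
    ∀ g : F, g ^ p ≠ aF := by
  haveI : NeZero p := ⟨hp.ne_zero⟩
  intro g hg
  obtain ⟨r, hrp, hKsup⟩ := haKum 0 (by omega)
  have haF0 : aF ≠ 0 := by
    intro h
    rw [h, map_zero] at haF
    exact ha00 haF.symm
  have hg0 : g ≠ 0 := fun h => haF0 (by rw [← hg, h, zero_pow hp.ne_zero])
  have hgK0 : algebraMap F K g ≠ 0 := fun h => hg0 ((algebraMap F K).injective (by simpa using h))
  have hζK : IsPrimitiveRoot (algebraMap F K ζF) p :=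
    hζ.map_of_injective (f := algebraMap F K) (algebraMap F K).injective
  have h1 : (r / algebraMap F K g) ^ p = 1 := by
    rw [div_pow, hrp, ← haF, ← hg, map_pow, div_self (pow_ne_zero p hgK0)]
  obtain ⟨m, hm, hmeq⟩ := hζK.eq_pow_of_pow_eq_one h1
  have hrval : r = algebraMap F K (ζF ^ m * g) := by
    rw [map_mul, map_pow]
    rw [eq_div_iff hgK0] at hmeq
    exact hmeq.symm
  have hrbot : r ∈ (⊥ : IntermediateField F K) :=
    IntermediateField.mem_bot.mpr ⟨ζF ^ m * g, hrval.symm⟩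
  have hrKi0 : r ∈ Ki 0 := (bot_le : (⊥ : IntermediateField F K) ≤ Ki 0) hrbot
  have hle : Ki 1 ≤ Ki 0 := by
    rw [hKsup]
    exact sup_le le_rfl (IntermediateField.adjoin_le_iff.mpr (by simpa using hrKi0))
  have heq : Ki 1 = Ki 0 := le_antisymm hle (hchain 0 1 (by omega) hn)
  have h2 := hKideg 1 hn
  have h3 := hKideg 0 (by omega)
  rw [heq, h3] at h2
  exact absurd (Nat.pow_right_injective hp.two_le h2) (by omega)

lemma dvd_of_pow_eq_pow (hp : p.Prime) {aF c : F} (hnotpow : ∀ g : F, g ^ p ≠ aF)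
    (haF0 : aF ≠ 0) {m : ℕ} (h : aF ^ m = c ^ p) : p ∣ m := by
  haveI := Fact.mk hp
  by_contra hnd
  have hm0 : (m : ZMod p) ≠ 0 := by
    rwa [Ne, ZMod.natCast_eq_zero_iff]
  set u := ((m : ZMod p)⁻¹).val with hudef
  have h1 : (m * u) % p = 1 % p := by
    have hcast : ((m * u : ℕ) : ZMod p) = ((1 : ℕ) : ZMod p) := by
      push_cast [hudef, ZMod.natCast_val, ZMod.cast_id]
      field_simp
    exact (ZMod.natCast_eq_natCast_iff _ _ _).mp hcast
  have hp1 : 1 % p = 1 := Nat.mod_eq_of_lt hp.one_lt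
  have hmu : m * u = p * (m * u / p) + 1 := by
    conv_lhs => rw [← Nat.div_add_mod (m * u) p]
    rw [h1, hp1]
  set v := m * u / p with hvdef
  apply hnotpow (c ^ u / aF ^ v)
  rw [div_pow, div_eq_iff (pow_ne_zero p (pow_ne_zero v haF0))]
  calc (c ^ u) ^ p = (c ^ p) ^ u := by rw [← pow_mul, ← pow_mul, mul_comm]
    _ = aF ^ (m * u) := by rw [← h, ← pow_mul]
    _ = aF ^ (p * v + 1) := by rw [← hmu]
    _ = aF * (aF ^ v) ^ p := by rw [pow_add, pow_one, ← pow_mul, mul_comm p v, mul_comm]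


end Main

/-- **Norm Lemma.** With `a_i` as in the Subfield Generators proposition and `a = a_0`:
if `l(γ) < p^n` then `[N_{K/F}(γ)]_F ∈ ⟨[a]_F⟩`; if moreover `l(γ) ≤ p^n - p^i` for some
`0 ≤ i < n`, then `[N_{K/K_i}(γ)]_{K_i} ∈ ⟨[a_i]_{K_i}⟩` and `[N_{K/F}(γ)]_F = [a]_F^s`
iff `[N_{K/K_i}(γ)]_{K_i} = [a_i]_{K_i}^s`. -/
theorem statement_15
    (p n : ℕ) (hp : p.Prime) (hn : 1 ≤ n)
    (F K : Type) [Field F] [Field K] [Algebra F K]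
    [FiniteDimensional F K] [IsGalois F K]
    (σ : K ≃ₐ[F] K) (hσ : ∀ τ : K ≃ₐ[F] K, τ ∈ Subgroup.zpowers σ)
    (hG : Nat.card (K ≃ₐ[F] K) = p ^ n)
    (Ki : ℕ → IntermediateField F K)
    (hKideg : ∀ i, i ≤ n → Module.finrank F ↥(Ki i) = p ^ i)
    (hchain : ∀ i j : ℕ, i ≤ j → j ≤ n → Ki i ≤ Ki j)
    (hξ : ∃ ζ : F, IsPrimitiveRoot ζ p)
    (a : (i : ℕ) → ↥(Ki i))
    (ha0 : ∀ i : ℕ, i < n → (a i : K) ≠ 0)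
    (haKum : ∀ i : ℕ, i < n → ∃ r : K, r ^ p = (a i : K) ∧
      Ki (i + 1) = Ki i ⊔ IntermediateField.adjoin F {r})
    (haNorm : ∀ j i : ℕ, ∀ hji : j < i, ∀ hi : i < n,
      (@Algebra.norm (↥(Ki j)) (↥(Ki i)) _ _
        ((IntermediateField.inclusion (hchain j i hji.le hi.le)).toRingHom.toAlgebra))
        (a i) = a j)
    (aF : F) (haF : algebraMap F K aF = (a 0 : K)) :
    -- first statement:
    (∀ (γ : Kˣ) (l : ℕ), Nat.card (cyc p F (cls p γ)) = p ^ l → l < p ^ n →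
      ∃ (s : ℕ) (f : F), Algebra.norm F (γ : K) = aF ^ s * f ^ p) ∧
    -- second statement:
    (∀ (γ : Kˣ) (l : ℕ), Nat.card (cyc p F (cls p γ)) = p ^ l →
      ∀ i : ℕ, i < n → l ≤ p ^ n - p ^ i →
      (∃ (s : ℕ) (y : ↥(Ki i)), Algebra.norm (↥(Ki i)) (γ : K) = (a i) ^ s * y ^ p) ∧
      ∀ s : ℕ, ((∃ f : F, Algebra.norm F (γ : K) = aF ^ s * f ^ p) ↔
        (∃ y : ↥(Ki i), Algebra.norm (↥(Ki i)) (γ : K) = (a i) ^ s * y ^ p))) := by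
  obtain ⟨ζF, hζ⟩ := hξ
  have hn0 : 0 < n := hn
  haveI : NeZero p := ⟨hp.ne_zero⟩
  have hnotpow : ∀ g : F, g ^ p ≠ aF :=
    aF_not_pow hp hn Ki hKideg hchain hζ a (ha0 0 hn0) haKum aF haF
  have haF0 : aF ≠ 0 := fun h => (ha0 0 hn0) (by rw [← haF, h, map_zero])
  have hNa : ∀ i, i < n → Algebra.norm F (a i) = aF := fun i hi =>
    norm_a hp Ki hKideg hchain a haNorm aF haF hi
  have hnormtrans : ∀ (i : ℕ) (x : K),
      Algebra.norm F x = Algebra.norm F (Algebra.norm (↥(Ki i)) x) := fun i x =>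
    (Algebra.norm_norm (R := F) (S := ↥(Ki i)) (a := x)).symm
  have hsec : ∀ (γ : Kˣ) (l : ℕ), Nat.card (cyc p F (cls p γ)) = p ^ l →
      ∀ i : ℕ, i < n → l ≤ p ^ n - p ^ i →
      ∃ (s : ℕ) (y : ↥(Ki i)), Algebra.norm (↥(Ki i)) ((γ : K)) = (a i) ^ s * y ^ p :=
    fun γ l hc i hi hl => master hp σ hσ hG Ki hKideg hchain hζ a ha0 haKum hi γ l hc hl
  constructor
  · intro γ l hc hl
    have hl' : l ≤ p ^ n - p ^ 0 := by
      have h00 : p ^ 0 = 1 := pow_zero p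
      omega
    obtain ⟨s, y, hy⟩ := hsec γ l hc 0 hn0 hl'
    refine ⟨s, Algebra.norm F y, ?_⟩
    rw [hnormtrans 0, hy, map_mul, map_pow, map_pow, hNa 0 hn0]
  · intro γ l hc i hi hl
    obtain ⟨t, y₀, hy₀⟩ := hsec γ l hc i hi hl
    have hai0 : (a i) ≠ (0 : ↥(Ki i)) := fun h' => (ha0 i hi) (by rw [h']; simp)
    refine ⟨⟨t, y₀, hy₀⟩, ?_⟩
    intro s
    have hNt : Algebra.norm F ((γ : K)) = aF ^ t * (Algebra.norm F y₀) ^ p := by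
      rw [hnormtrans i, hy₀, map_mul, map_pow, map_pow, hNa i hi]
    constructor
    · rintro ⟨f, hf⟩
      have hγ0 : Algebra.norm F ((γ : K)) ≠ 0 := by
        rw [Algebra.norm_ne_zero_iff]
        exact Units.ne_zero γ
      have hf0 : f ≠ 0 := by
        intro h
        rw [h, zero_pow hp.ne_zero, mul_zero] at hf
        exact hγ0 hf
      have hh0 : Algebra.norm F y₀ ≠ 0 := by
        intro h
        rw [h, zero_pow hp.ne_zero, mul_zero] at hNt
        exact hγ0 hNt
      have heq : aF ^ s * f ^ p = aF ^ t * (Algebra.norm F y₀) ^ p := by rw [← hf, hNt]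
      rcases le_total t s with hts | hst
      · have hst' : s = t + (s - t) := by omega
        have h2 : aF ^ (s - t) = (Algebra.norm F y₀ / f) ^ p := by
          rw [div_pow, eq_div_iff (pow_ne_zero p hf0)]
          have h3 : aF ^ t * (aF ^ (s - t) * f ^ p) = aF ^ t * (Algebra.norm F y₀) ^ p := by
            rw [← mul_assoc, ← pow_add, ← hst']
            exact heq
          exact mul_left_cancel₀ (pow_ne_zero t haF0) h3
        obtain ⟨m, hm⟩ := dvd_of_pow_eq_pow hp hnotpow haF0 h2
        have hspm : s = t + p * m := by omega
        refine ⟨y₀ / (a i) ^ m, ?_⟩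
        rw [hy₀, hspm, div_pow, ← pow_mul]
        field_simp
        ring
      · have hts' : t = s + (t - s) := by omega
        have h2 : aF ^ (t - s) = (f / Algebra.norm F y₀) ^ p := by
          rw [div_pow, eq_div_iff (pow_ne_zero p hh0)]
          have h3 : aF ^ s * (aF ^ (t - s) * (Algebra.norm F y₀) ^ p) = aF ^ s * f ^ p := by
            rw [← mul_assoc, ← pow_add, ← hts']
            exact heq.symm
          exact mul_left_cancel₀ (pow_ne_zero s haF0) h3
        obtain ⟨m, hm⟩ := dvd_of_pow_eq_pow hp hnotpow haF0 h2
        have htpm : t = s + p * m := by omega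
        refine ⟨y₀ * (a i) ^ m, ?_⟩
        rw [hy₀, htpm, mul_pow, ← pow_mul]
        ring
    · rintro ⟨y, hy⟩
      exact ⟨Algebra.norm F y, by
        rw [hnormtrans i, hy, map_mul, map_pow, map_pow, hNa i hi]⟩


end PC
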